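/- Let ℓ₂ be the complex Hilbert space of square-summable complex sequences, let g₀ ∈ ℓ₂ with ‖g₀‖ = 1, and let ε ∈ (0,1). Suppose there exists a bounded linear operator T on ℓ₂ which has no eigenvector (there is no non-zero x ∈ ℓ₂ and λ ∈ ℂ with Tx = λx) and which satisfies (P3'): for every non-zero x ∈ ℓ₂ the distance of the closed linear span M_x of Orb(x,T) to g₀ is less than ε, i.e. inf{‖y − g₀‖ : y ∈ M_x} < ε. Then there exists a bounded linear operator T' on ℓ₂ which has no non-trivial invariant closed subspace, i.e. every non-zero vector of ℓ₂ is cyclic for T'. -/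

import Mathlib

set_option maxHeartbeats 1000000


/-- The complex Hilbert space `ℓ₂` of square-summable complex sequences. -/
abbrev ellTwo : Type := lp (fun _ : ℕ => ℂ) 2

open Metric Set Submodule Filter Topology

section AuxIsp

variable {E : Type*} [NormedAddCommGroup E] [InnerProductSpace ℂ E] [CompleteSpace E]

/-- Parallelogram-law estimate: two points of a submodule which are nearly at the minimal
distance from `g₀` are close to each other. -/
lemma isp_par_est (g₀ : E) (u v : E) {C : Submodule ℂ E} (hu : u ∈ C) (hv : v ∈ C)
    {d α β : ℝ} (hd : 0 ≤ d) (hα0 : 0 < α) (hβ0 : 0 < β) (hα1 : α ≤ 1) (hβ1 : β ≤ 1)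
    (hu' : dist g₀ u ≤ d + α) (hv' : dist g₀ v ≤ d + β)
    (hq1 : d - β ≤ Metric.infDist g₀ (C : Set E))
    (hq2 : Metric.infDist g₀ (C : Set E) ≤ d) :
    ‖u - v‖ ^ 2 ≤ (16 * d + 8) * (α + β) := by
  set q := Metric.infDist g₀ (C : Set E) with hqdef
  have hq0 : 0 ≤ q := Metric.infDist_nonneg
  set m : E := (2 : ℂ)⁻¹ • (u + v) with hm
  have hmC : m ∈ C := C.smul_mem _ (C.add_mem hu hv)
  have hqm : q ≤ dist g₀ m := Metric.infDist_le_dist_of_mem hmC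
  have hpar := parallelogram_law_with_norm ℂ (u - g₀) (v - g₀)
  have h1 : u - g₀ + (v - g₀) = (2 : ℂ) • (m - g₀) := by
    rw [hm, smul_sub, smul_inv_smul₀ (two_ne_zero), two_smul]
    abel
  have h2 : u - g₀ - (v - g₀) = u - v := by abel
  rw [h1, h2] at hpar
  have h3 : ‖(2 : ℂ) • (m - g₀)‖ = 2 * ‖m - g₀‖ := by
    rw [norm_smul]; norm_num
  rw [h3] at hpar
  have hA : ‖u - g₀‖ ≤ d + α := by rw [← dist_eq_norm, dist_comm]; exact hu'
  have hB : ‖v - g₀‖ ≤ d + β := by rw [← dist_eq_norm, dist_comm]; exact hv'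
  have hM : q ≤ ‖m - g₀‖ := by rw [← dist_eq_norm, dist_comm]; exact hqm
  have hA0 : 0 ≤ ‖u - g₀‖ := norm_nonneg _
  have hB0 : 0 ≤ ‖v - g₀‖ := norm_nonneg _
  have hprod : 0 ≤ (q - (d - β)) * (q + d) := mul_nonneg (by linarith) (by linarith)
  have hA2 : ‖u - g₀‖ * ‖u - g₀‖ ≤ (d + α) * (d + α) :=
    mul_le_mul hA hA hA0 (by linarith)
  have hB2 : ‖v - g₀‖ * ‖v - g₀‖ ≤ (d + β) * (d + β) :=
    mul_le_mul hB hB hB0 (by linarith)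
  have hM2 : q * q ≤ ‖m - g₀‖ * ‖m - g₀‖ := mul_le_mul hM hM hq0 (norm_nonneg _)
  have hbq : β * q ≤ β * d := mul_le_mul_of_nonneg_left hq2 hβ0.le
  have hα2 : α * α ≤ α := by nlinarith
  have hβ2 : β * β ≤ β := by nlinarith
  have hdα : 0 ≤ d * α := mul_nonneg hd hα0.le
  have hdβ : 0 ≤ d * β := mul_nonneg hd hβ0.le
  nlinarith [hpar, hprod, hA2, hB2, hM2, hbq, hα2, hβ2, hdα, hdβ]

/-- The intersection of a chain of closed submodules, each at distance at most `ε` from `g₀`,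
is still at distance at most `ε` from `g₀`. -/
lemma isp_chain_infDist (g₀ : E) {ε : ℝ}
    {c : Set (Submodule ℂ E)} (hchain : IsChain (· ≤ ·) c) (hcne : c.Nonempty)
    (hcl : ∀ N ∈ c, IsClosed (N : Set E))
    (hd : ∀ N ∈ c, Metric.infDist g₀ (N : Set E) ≤ ε) :
    Metric.infDist g₀ ((sInf c : Submodule ℂ E) : Set E) ≤ ε := by
  classical
  set f : Submodule ℂ E → ℝ := fun N => Metric.infDist g₀ (N : Set E) with hf
  set D : Set ℝ := f '' c with hD
  have hDne : D.Nonempty := hcne.image f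
  have hDbdd : BddAbove D := ⟨ε, by rintro r ⟨N, hN, rfl⟩; exact hd N hN⟩
  set d : ℝ := sSup D with hdd
  have hdε : d ≤ ε := csSup_le hDne (by rintro r ⟨N, hN, rfl⟩; exact hd N hN)
  have hd0 : 0 ≤ d := by
    obtain ⟨N, hN⟩ := hcne
    exact le_trans Metric.infDist_nonneg (le_csSup hDbdd ⟨N, hN, rfl⟩)
  have hfle : ∀ N ∈ c, f N ≤ d := fun N hN => le_csSup hDbdd ⟨N, hN, rfl⟩
  set δ : ℕ → ℝ := fun n => 1 / ((n : ℝ) + 1) with hδ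
  have hpos : ∀ n : ℕ, (0 : ℝ) < δ n := fun n => by positivity
  have hle1 : ∀ n : ℕ, δ n ≤ 1 := fun n => by
    rw [hδ]; rw [div_le_one (by positivity)]
    exact le_add_of_nonneg_left (Nat.cast_nonneg n)
  have hsel : ∀ n : ℕ, ∃ N ∈ c, d - δ n < f N := by
    intro n
    obtain ⟨r, hrD, hr⟩ := exists_lt_of_lt_csSup hDne
      (show d - δ n < d by linarith [hpos n])
    obtain ⟨N, hN, rfl⟩ := hrD
    exact ⟨N, hN, hr⟩
  choose Ns hNs hNd using hsel
  have hysel : ∀ n : ℕ, ∃ y ∈ (Ns n : Set E), dist g₀ y < f (Ns n) + δ n := fun n =>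
    (Metric.infDist_lt_iff ⟨0, (Ns n).zero_mem⟩).1 (lt_add_of_pos_right _ (hpos n))
  choose y hymem hyd using hysel
  have hydist : ∀ n, dist g₀ (y n) ≤ d + δ n := fun n =>
    le_of_lt (lt_of_lt_of_le (hyd n) (by linarith [hfle _ (hNs n)]))
  have est : ∀ m n : ℕ, Ns m ≤ Ns n → ‖y m - y n‖ ^ 2 ≤ (16 * d + 8) * (δ m + δ n) := by
    intro m n hmn
    exact isp_par_est g₀ (y m) (y n) (hmn (hymem m)) (hymem n) hd0 (hpos m) (hpos n)
      (hle1 m) (hle1 n) (hydist m) (hydist n) (le_of_lt (hNd n)) (hfle _ (hNs n))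
  have est' : ∀ m n : ℕ, ‖y m - y n‖ ^ 2 ≤ (16 * d + 8) * (δ m + δ n) := by
    intro m n
    rcases eq_or_ne m n with rfl | hmn
    · exact est m m le_rfl
    rcases eq_or_ne (Ns m) (Ns n) with hNe | hNe
    · exact est m n (le_of_eq hNe)
    rcases hchain (hNs m) (hNs n) hNe with h | h
    · exact est m n h
    · have h1 := est n m h
      rw [norm_sub_rev] at h1
      calc ‖y m - y n‖ ^ 2 ≤ (16 * d + 8) * (δ n + δ m) := h1
        _ = (16 * d + 8) * (δ m + δ n) := by ring
  have hCnn : (0 : ℝ) ≤ 16 * d + 8 := by linarith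
  set b : ℕ → ℝ := fun N => Real.sqrt ((16 * d + 8) * (2 * δ N)) with hbdef
  have hb_bound : ∀ u w N : ℕ, N ≤ u → N ≤ w → ‖y u - y w‖ ≤ b N := by
    intro u w N hu hw
    have h1 : δ u ≤ δ N := by
      rw [hδ]
      apply one_div_le_one_div_of_le (by positivity)
      have : (N : ℝ) ≤ u := Nat.cast_le.2 hu
      linarith
    have h2 : δ w ≤ δ N := by
      rw [hδ]
      apply one_div_le_one_div_of_le (by positivity)
      have : (N : ℝ) ≤ w := Nat.cast_le.2 hw
      linarith
    rw [hbdef, Real.le_sqrt (norm_nonneg _) (by positivity)]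
    calc ‖y u - y w‖ ^ 2 ≤ (16 * d + 8) * (δ u + δ w) := est' u w
      _ ≤ (16 * d + 8) * (2 * δ N) := by
          apply mul_le_mul_of_nonneg_left _ hCnn
          linarith
  have hb0 : Tendsto b atTop (𝓝 0) := by
    have hδ0 : Tendsto δ atTop (𝓝 0) := by
      rw [hδ]; exact tendsto_one_div_add_atTop_nhds_zero_nat
    have h1 : Tendsto (fun N : ℕ => (16 * d + 8) * (2 * δ N)) atTop (𝓝 0) := by
      have h := (hδ0.const_mul (2 : ℝ)).const_mul (16 * d + 8)
      simpa only [mul_zero] using h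
    have h2 := (Real.continuous_sqrt.tendsto 0).comp h1
    simpa only [Function.comp_def, Real.sqrt_zero] using h2
  have hcau : CauchySeq y := by
    apply cauchySeq_of_le_tendsto_0 b _ hb0
    intro u w N hu hw
    rw [dist_eq_norm]
    exact hb_bound u w N hu hw
  obtain ⟨p, hp⟩ := cauchySeq_tendsto_of_complete hcau
  have hdistp0 : Tendsto (fun n => dist p (y n)) atTop (𝓝 0) := by
    have := tendsto_iff_dist_tendsto_zero.1 hp
    simpa [dist_comm] using this
  have hmemN : ∀ N ∈ c, p ∈ (N : Set E) := by
    intro N hNc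
    have hclN := hcl N hNc
    have hineq : ∀ n : ℕ, Metric.infDist p (N : Set E) ≤ dist p (y n) + b n := by
      intro n
      rcases eq_or_ne (Ns n) N with hNe | hNe
      · have hyn : y n ∈ (N : Set E) := hNe ▸ hymem n
        have h1 : Metric.infDist p (N : Set E) ≤ dist p (y n) :=
          Metric.infDist_le_dist_of_mem hyn
        have h2 : 0 ≤ b n := Real.sqrt_nonneg _
        linarith
      rcases hchain (hNs n) hNc hNe with h | h
      · have hyn : y n ∈ (N : Set E) := h (hymem n)
        have h1 : Metric.infDist p (N : Set E) ≤ dist p (y n) :=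
          Metric.infDist_le_dist_of_mem hyn
        have h2 : 0 ≤ b n := Real.sqrt_nonneg _
        linarith
      · obtain ⟨z, hz, hzd⟩ := (Metric.infDist_lt_iff ⟨0, N.zero_mem⟩).1
          (lt_add_of_pos_right (Metric.infDist g₀ (N : Set E)) (hpos n))
        have hzd' : dist g₀ z ≤ d + δ n :=
          le_of_lt (lt_of_lt_of_le hzd (by linarith [hfle N hNc]))
        have hest := isp_par_est g₀ z (y n) (h hz) (hymem n) hd0 (hpos n) (hpos n)
          (hle1 n) (hle1 n) hzd' (hydist n) (le_of_lt (hNd n)) (hfle _ (hNs n))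
        have h3 : ‖z - y n‖ ≤ b n := by
          rw [hbdef, Real.le_sqrt (norm_nonneg _) (by positivity)]
          calc ‖z - y n‖ ^ 2 ≤ (16 * d + 8) * (δ n + δ n) := hest
            _ = (16 * d + 8) * (2 * δ n) := by ring
        have h4 : Metric.infDist p (N : Set E) ≤ dist p z :=
          Metric.infDist_le_dist_of_mem hz
        have h5 : dist p z ≤ dist p (y n) + dist (y n) z := dist_triangle _ _ _
        have h6 : dist (y n) z = ‖z - y n‖ := by rw [dist_eq_norm, norm_sub_rev]
        linarith
    have hlim : Tendsto (fun n => dist p (y n) + b n) atTop (𝓝 0) := by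
      have := hdistp0.add hb0
      simpa using this
    have hle0 : Metric.infDist p (N : Set E) ≤ 0 :=
      ge_of_tendsto hlim (Filter.Eventually.of_forall hineq)
    exact (hclN.mem_iff_infDist_zero ⟨0, N.zero_mem⟩).2
      (le_antisymm hle0 Metric.infDist_nonneg)
  have hpmem : p ∈ (sInf c : Submodule ℂ E) := Submodule.mem_sInf.2 fun N hN => hmemN N hN
  have hdistp : dist g₀ p ≤ d := by
    have l1 : Tendsto (fun n => dist g₀ (y n)) atTop (𝓝 (dist g₀ p)) :=
      tendsto_const_nhds.dist hp
    have hδ0 : Tendsto δ atTop (𝓝 0) := by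
      rw [hδ]; exact tendsto_one_div_add_atTop_nhds_zero_nat
    have l2 : Tendsto (fun n : ℕ => d + δ n) atTop (𝓝 (d + 0)) :=
      tendsto_const_nhds.add hδ0
    have := le_of_tendsto_of_tendsto' l1 l2 hydist
    simpa using this
  calc Metric.infDist g₀ ((sInf c : Submodule ℂ E) : Set E) ≤ dist g₀ p :=
        Metric.infDist_le_dist_of_mem hpmem
    _ ≤ d := hdistp
    _ ≤ ε := hdε

end AuxIsp

/-- **Theorem 1.5 of the paper.** Let `g₀ ∈ ℓ₂` with `‖g₀‖ = 1` and `ε ∈ (0,1)`.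
If there is a bounded operator `T` on `ℓ₂` with no eigenvector such that
(P3') for every non-zero `x` the distance of the closed linear span `M_x` of the orbit of `x`
to `g₀` is `< ε`, then there is a bounded operator `T'` on `ℓ₂` with no non-trivial invariant
closed subspace, i.e. every non-zero vector is cyclic for `T'`. -/
theorem exists_operator_without_invariant_subspace_of_P3'
    (g₀ : ellTwo) (hg₀ : ‖g₀‖ = 1) (ε : ℝ) (hε0 : 0 < ε) (hε1 : ε < 1)
    (T : ellTwo →L[ℂ] ellTwo)
    -- `T` has no eigenvector:
    (heig : ∀ x : ellTwo, x ≠ 0 → ∀ l : ℂ, T x ≠ l • x)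
    -- (P3'): the distance of the closed linear span of any orbit of a non-zero vector
    -- to `g₀` is `< ε`:
    (hP3' : ∀ x : ellTwo, x ≠ 0 →
      Metric.infDist g₀
        (((Submodule.span ℂ (Set.range fun n : ℕ => (T ^ n) x)).topologicalClosure :
          Submodule ℂ ellTwo) : Set ellTwo) < ε) :
    ∃ T' : ellTwo →L[ℂ] ellTwo,
      ∀ x : ellTwo, x ≠ 0 →
        Dense ((Submodule.span ℂ (Set.range fun n : ℕ => (T' ^ n) x) :
          Submodule ℂ ellTwo) : Set ellTwo) := by
  classical
  -- separability of ℓ₂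
  haveI hsep : TopologicalSpace.SeparableSpace ellTwo := by
    have b₀ : HilbertBasis ℕ ℂ ellTwo := default
    have hcs : (Set.range ⇑b₀).Countable := Set.countable_range _
    have hsep1 : TopologicalSpace.IsSeparable
        ((Submodule.span ℂ (Set.range ⇑b₀) : Submodule ℂ ellTwo) : Set ellTwo) :=
      hcs.isSeparable.span
    have hsep2 := hsep1.closure
    have hcl : closure ((Submodule.span ℂ (Set.range ⇑b₀) : Submodule ℂ ellTwo) : Set ellTwo)
        = Set.univ := by
      rw [← Submodule.topologicalClosure_coe, b₀.dense_span, Submodule.top_coe]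
    rw [hcl] at hsep2
    exact TopologicalSpace.isSeparable_univ_iff.1 hsep2
  haveI : SecondCountableTopology ellTwo := UniformSpace.secondCountable_of_separable _
  have hg0ne : g₀ ≠ 0 := fun h => by simp [h] at hg₀
  -- the closed span of the orbit of a vector
  set Mx : ellTwo → Submodule ℂ ellTwo := fun x =>
    (Submodule.span ℂ (Set.range fun n : ℕ => (T ^ n) x)).topologicalClosure with hMxdef
  have hMxcl : ∀ x, IsClosed ((Mx x : Submodule ℂ ellTwo) : Set ellTwo) := fun x =>
    Submodule.isClosed_topologicalClosure _
  have hMxinv : ∀ x, ∀ z ∈ Mx x, T z ∈ Mx x := by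
    intro x z hz
    set s : Submodule ℂ ellTwo := Submodule.span ℂ (Set.range fun n : ℕ => (T ^ n) x) with hs
    have himg : (T : ellTwo → ellTwo) '' (s : Set ellTwo) ⊆ (s : Set ellTwo) := by
      have hmap : Submodule.map (T : ellTwo →ₗ[ℂ] ellTwo) s ≤ s := by
        rw [hs, Submodule.map_span]
        apply Submodule.span_le.2
        rintro _ ⟨_, ⟨n, rfl⟩, rfl⟩
        apply Submodule.subset_span
        refine ⟨n + 1, ?_⟩
        show (T ^ (n + 1)) x = T ((T ^ n) x)
        rw [pow_succ']; rfl
      intro u hu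
      obtain ⟨w, hw, rfl⟩ := hu
      exact hmap ⟨w, hw, rfl⟩
    have hz' : z ∈ closure (s : Set ellTwo) := by
      rw [← Submodule.topologicalClosure_coe]; exact hz
    have h1 : T z ∈ closure ((T : ellTwo → ellTwo) '' (s : Set ellTwo)) :=
      image_closure_subset_closure_image T.continuous ⟨z, hz', rfl⟩
    have h2 : T z ∈ closure (s : Set ellTwo) := closure_mono himg h1
    rw [← Submodule.topologicalClosure_coe] at h2
    exact h2
  have hMxS0 : ∀ x, x ∈ Mx x := by
    intro x
    apply Submodule.le_topologicalClosure
    apply Submodule.subset_span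
    exact ⟨0, by simp⟩
  set S : Set (Submodule ℂ ellTwo) :=
    {N | IsClosed (N : Set ellTwo) ∧ (∀ z ∈ N, T z ∈ N) ∧
      Metric.infDist g₀ (N : Set ellTwo) ≤ ε} with hSdef
  have hMxS : ∀ x, x ≠ 0 → Mx x ∈ S := fun x hx => ⟨hMxcl x, hMxinv x, (hP3' x hx).le⟩
  -- Zorn's lemma in the dual order: a minimal element of S
  obtain ⟨m, -, hm_max⟩ :=
    zorn_le_nonempty₀ (α := (Submodule ℂ ellTwo)ᵒᵈ) S
      (fun c hcS hchain Nc hNcc => by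
        set c' : Set (Submodule ℂ ellTwo) := OrderDual.ofDual '' c with hc'
        have hc'mem : ∀ N : Submodule ℂ ellTwo, N ∈ c' ↔ OrderDual.toDual N ∈ c := by
          intro N
          constructor
          · rintro ⟨a, ha, rfl⟩; exact ha
          · intro h; exact ⟨OrderDual.toDual N, h, rfl⟩
        have hchain' : IsChain (· ≤ ·) c' := by
          rintro _ ⟨a, ha, rfl⟩ _ ⟨b, hb, rfl⟩ hne
          rcases hchain ha hb (fun h => hne (congrArg OrderDual.ofDual h)) with h | h
          · exact Or.inr h
          · exact Or.inl h
        have hc'ne : c'.Nonempty := ⟨OrderDual.ofDual Nc, Nc, hNcc, rfl⟩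
        have hc'S : ∀ N ∈ c', N ∈ S := by
          rintro _ ⟨a, ha, rfl⟩; exact hcS ha
        have hSmem : sInf c' ∈ S := by
          refine ⟨?_, ?_, ?_⟩
          · rw [Submodule.coe_sInf]
            exact isClosed_biInter fun N hN => (hc'S N hN).1
          · intro z hz
            rw [Submodule.mem_sInf] at hz ⊢
            intro N hN
            exact (hc'S N hN).2.1 z (hz N hN)
          · exact isp_chain_infDist g₀ hchain' hc'ne (fun N hN => (hc'S N hN).1)
              (fun N hN => (hc'S N hN).2.2)
        refine ⟨OrderDual.toDual (sInf c'), hSmem, fun z hz => ?_⟩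
        exact sInf_le ((hc'mem (OrderDual.ofDual z)).2 hz))
      (OrderDual.toDual (Mx g₀)) (hMxS g₀ hg0ne)
  set N : Submodule ℂ ellTwo := OrderDual.ofDual m with hNdef
  have hNS : N ∈ S := hm_max.1
  have hmin : ∀ z : Submodule ℂ ellTwo, z ∈ S → z ≤ N → N ≤ z := by
    intro z hzS hzN
    exact hm_max.2 hzS hzN
  -- every non-zero element of N has orbit closure equal to N
  have hcyc : ∀ x : ellTwo, x ∈ N → x ≠ 0 → Mx x = N := by
    intro x hxN hx0
    have horb : ∀ n : ℕ, (T ^ n) x ∈ N := by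
      intro n
      induction n with
      | zero => simpa using hxN
      | succ k ih =>
        have : (T ^ (k + 1)) x = T ((T ^ k) x) := by rw [pow_succ']; rfl
        rw [this]
        exact hNS.2.1 _ ih
    have h1 : Mx x ≤ N := by
      apply Submodule.topologicalClosure_minimal _ _ hNS.1
      apply Submodule.span_le.2
      rintro _ ⟨n, rfl⟩
      exact horb n
    exact le_antisymm h1 (hmin (Mx x) (hMxS x hx0) h1)
  -- N contains a non-zero vector
  obtain ⟨v₀, hv₀N, hv₀ne⟩ : ∃ v ∈ N, v ≠ 0 := by
    obtain ⟨yy, hyyN, hyyd⟩ := (Metric.infDist_lt_iff ⟨0, N.zero_mem⟩).1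
      (lt_of_le_of_lt hNS.2.2 hε1)
    refine ⟨yy, hyyN, fun h => ?_⟩
    rw [h, dist_zero_right, hg₀] at hyyd
    exact lt_irrefl 1 hyyd
  haveI : CompleteSpace N := hNS.1.completeSpace_coe
  -- the restricted operator
  set TN : N →L[ℂ] N :=
    ContinuousLinearMap.codRestrict (T.comp N.subtypeL) N (fun z => hNS.2.1 _ z.2) with hTNdef
  have hTNcoe : ∀ z : N, ((TN z : N) : ellTwo) = T (z : ellTwo) := fun z => rfl
  have hTNpow : ∀ (n : ℕ) (z : N), (((TN ^ n) z : N) : ellTwo) = (T ^ n) (z : ellTwo) := by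
    intro n
    induction n with
    | zero => intro z; simp
    | succ k ih =>
      intro z
      have e1 : (TN ^ (k + 1)) z = (TN ^ k) (TN z) := by rw [pow_succ]; rfl
      have e2 : (T ^ (k + 1)) (z : ellTwo) = (T ^ k) (T (z : ellTwo)) := by rw [pow_succ]; rfl
      rw [e1, e2, ih (TN z), hTNcoe]
  -- N is infinite dimensional
  have hinf : ¬ FiniteDimensional ℂ N := by
    intro hfd
    haveI := hfd
    haveI : Nontrivial N :=
      ⟨⟨⟨v₀, hv₀N⟩, 0, fun h => hv₀ne (by simpa using congrArg Subtype.val h)⟩⟩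
    obtain ⟨μ, hμ⟩ := Module.End.exists_eigenvalue (TN : N →ₗ[ℂ] N)
    obtain ⟨v, hv⟩ := hμ.exists_hasEigenvector
    have hveq : TN v = μ • v := hv.apply_eq_smul
    have hcoe : T (v : ellTwo) = μ • (v : ellTwo) := by
      have h1 : ((TN v : N) : ellTwo) = ((μ • v : N) : ellTwo) := congrArg Subtype.val hveq
      rw [hTNcoe] at h1
      rw [h1, Submodule.coe_smul]
    exact heig (v : ellTwo) (fun h => hv.2 (Submodule.coe_eq_zero.1 h)) μ hcoe
  -- a Hilbert basis of N indexed by ℕ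
  obtain ⟨w, bw, hbw⟩ := exists_hilbertBasis ℂ N
  have hwcnt : w.Countable := by
    have horth : Orthonormal ℂ ((↑) : w → N) := hbw ▸ bw.orthonormal
    apply Set.PairwiseDisjoint.countable_of_isOpen
      (s := fun z : N => Metric.ball z (2⁻¹ : ℝ))
      ?_ (fun z _ => Metric.isOpen_ball) (fun z _ => ⟨z, Metric.mem_ball_self (by norm_num)⟩)
    intro a ha b hb hab
    have hinner : (inner ℂ a b : ℂ) = 0 :=
      horth.2 (i := ⟨a, ha⟩) (j := ⟨b, hb⟩) fun h => hab (congrArg Subtype.val h)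
    have hna : ‖(a : N)‖ = 1 := horth.1 ⟨a, ha⟩
    have hnb : ‖(b : N)‖ = 1 := horth.1 ⟨b, hb⟩
    have hsq : ‖a - b‖ ^ 2 = 2 := by
      rw [norm_sub_sq (𝕜 := ℂ), hinner, hna, hnb]
      norm_num
    have hdist : (2⁻¹ : ℝ) + 2⁻¹ ≤ dist a b := by
      rw [dist_eq_norm]
      nlinarith [norm_nonneg (a - b)]
    exact Metric.ball_disjoint_ball hdist
  have hwinf : w.Infinite := by
    intro hwfin
    apply hinf
    have hspan := bw.dense_span
    rw [hbw, Subtype.range_coe] at hspan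
    -- hspan : (span ℂ w).topologicalClosure = ⊤
    haveI hfd1 : FiniteDimensional ℂ ↥(Submodule.span ℂ w) :=
      FiniteDimensional.span_of_finite ℂ hwfin
    have hclosed : IsClosed ((Submodule.span ℂ w : Submodule ℂ N) : Set N) :=
      Submodule.closed_of_finiteDimensional _
    have htop : (Submodule.span ℂ w : Submodule ℂ N) = ⊤ := by
      have h2 : ((Submodule.span ℂ w : Submodule ℂ N) : Set N) = Set.univ := by
        rw [← hclosed.closure_eq, ← Submodule.topologicalClosure_coe, hspan,
          Submodule.top_coe]
      exact Submodule.eq_top_iff'.2 fun x => by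
        have hx : x ∈ ((Submodule.span ℂ w : Submodule ℂ N) : Set N) := h2 ▸ Set.mem_univ x
        exact hx
    haveI : FiniteDimensional ℂ ↥(⊤ : Submodule ℂ N) := htop ▸ hfd1
    exact (Submodule.topEquiv (R := ℂ) (M := N)).finiteDimensional
  haveI := hwcnt.to_subtype
  haveI := hwinf.to_subtype
  haveI : Denumerable ↥w := (nonempty_denumerable ↥w).some
  set e : ↥w ≃ ℕ := Denumerable.eqv ↥w with hedef
  set v : ℕ → N := fun n => bw (e.symm n) with hvdef
  have hvon : Orthonormal ℂ v := bw.orthonormal.comp _ e.symm.injective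
  have hvsp : ⊤ ≤ (Submodule.span ℂ (Set.range v)).topologicalClosure := by
    have hrange : Set.range v = Set.range ⇑bw := by
      rw [hvdef]
      exact Function.Surjective.range_comp e.symm.surjective ⇑bw
    rw [hrange, bw.dense_span]
  set bN : HilbertBasis ℕ ℂ N := HilbertBasis.mk hvon hvsp with hbNdef
  set iso : N ≃ₗᵢ[ℂ] ellTwo := bN.repr with hisodef
  set A : ellTwo →L[ℂ] N := iso.symm.toLinearIsometry.toContinuousLinearMap with hAdef
  set B : N →L[ℂ] ellTwo := iso.toLinearIsometry.toContinuousLinearMap with hBdef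
  refine ⟨B.comp (TN.comp A), ?_⟩
  set T' : ellTwo →L[ℂ] ellTwo := B.comp (TN.comp A) with hT'def
  intro x hx
  set z : N := iso.symm x with hzdef
  have hzne : z ≠ 0 := by
    intro h
    apply hx
    have h1 := congrArg iso h
    rw [hzdef] at h1
    simpa using h1
  have hzE : (z : ellTwo) ≠ 0 := fun h => hzne (Submodule.coe_eq_zero.1 h)
  have hT'pow : ∀ n : ℕ, (T' ^ n) x = iso ((TN ^ n) z) := by
    intro n
    induction n with
    | zero => simp [hzdef]
    | succ k ih =>
      have e1 : (T' ^ (k + 1)) x = T' ((T' ^ k) x) := by rw [pow_succ']; rfl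
      have e2 : (TN ^ (k + 1)) z = TN ((TN ^ k) z) := by rw [pow_succ']; rfl
      rw [e1, e2, ih]
      show B (TN (A (iso ((TN ^ k) z)))) = iso (TN ((TN ^ k) z))
      have hAI : A (iso ((TN ^ k) z)) = (TN ^ k) z := by
        show iso.symm (iso ((TN ^ k) z)) = (TN ^ k) z
        exact iso.symm_apply_apply _
      rw [hAI]
      rfl
  -- density of the orbit of z under TN in N
  have hMz : Mx (z : ellTwo) = N := hcyc (z : ellTwo) z.2 hzE
  have hsetv : Subtype.val ''
      ((Submodule.span ℂ (Set.range fun n : ℕ => (TN ^ n) z) : Submodule ℂ N) : Set N)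
      = ((Submodule.span ℂ (Set.range fun n : ℕ => (T ^ n) (z : ellTwo)) :
          Submodule ℂ ellTwo) : Set ellTwo) := by
    have h1 : Submodule.map N.subtype
        (Submodule.span ℂ (Set.range fun n : ℕ => (TN ^ n) z))
        = Submodule.span ℂ (Set.range fun n : ℕ => (T ^ n) (z : ellTwo)) := by
      rw [Submodule.map_span]
      congr 1
      rw [← Set.range_comp]
      exact congrArg Set.range (funext fun n => hTNpow n z)
    have h2 := congrArg (SetLike.coe (A := Submodule ℂ ellTwo)) h1
    rw [Submodule.map_coe] at h2
    exact h2
  have hdenseN : Dense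
      ((Submodule.span ℂ (Set.range fun n : ℕ => (TN ^ n) z) : Submodule ℂ N) : Set N) := by
    rw [dense_iff_closure_eq]
    apply Set.eq_univ_iff_forall.2
    intro u
    rw [closure_subtype, hsetv]
    have hcl : closure ((Submodule.span ℂ (Set.range fun n : ℕ => (T ^ n) (z : ellTwo)) :
        Submodule ℂ ellTwo) : Set ellTwo) = (N : Set ellTwo) := by
      rw [← Submodule.topologicalClosure_coe]
      exact congrArg _ hMz
    rw [hcl]
    exact u.2
  -- transport density through the isometry
  have hrangeT' : (Set.range fun n : ℕ => (T' ^ n) x)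
      = ⇑iso '' (Set.range fun n : ℕ => (TN ^ n) z) := by
    have h1 : (fun n : ℕ => (T' ^ n) x) = ⇑iso ∘ fun n => (TN ^ n) z := funext hT'pow
    rw [h1, Set.range_comp]
  have hspanim : ((Submodule.span ℂ (Set.range fun n : ℕ => (T' ^ n) x) :
      Submodule ℂ ellTwo) : Set ellTwo)
      = ⇑iso '' ((Submodule.span ℂ (Set.range fun n : ℕ => (TN ^ n) z) :
        Submodule ℂ N) : Set N) := by
    rw [hrangeT']
    have h1 : Submodule.span ℂ (⇑iso '' (Set.range fun n : ℕ => (TN ^ n) z))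
        = Submodule.map (iso.toLinearEquiv : N →ₗ[ℂ] ellTwo)
          (Submodule.span ℂ (Set.range fun n : ℕ => (TN ^ n) z)) := by
      rw [Submodule.map_span]
      congr 1
    have h2 := congrArg (SetLike.coe (A := Submodule ℂ ellTwo)) h1
    rw [Submodule.map_coe] at h2
    exact h2
  rw [hspanim, dense_iff_closure_eq]
  have himg_closure : closure (⇑iso ''
      ((Submodule.span ℂ (Set.range fun n : ℕ => (TN ^ n) z) : Submodule ℂ N) : Set N))
      = ⇑iso '' closure
      ((Submodule.span ℂ (Set.range fun n : ℕ => (TN ^ n) z) : Submodule ℂ N) : Set N) :=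
    (iso.toHomeomorph.image_closure _).symm
  rw [himg_closure, hdenseN.closure_eq, Set.image_univ]
  exact Set.range_eq_univ.2 iso.surjective
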